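/- Let X and Y be nonempty compact metric spaces with 2·ghDist(X,Y) = diam X = diam Y > 0 (mutual hyperextremality), and suppose there are cardinals 1 < n ≤ #X, 1 < m ≤ #Y with m ≤ n, a partition of X into n nonempty subsets D_X with α(D_X) > 0, and a covering of Y by m nonempty subsets whose diameters are all bounded by some c < diam Y. Then there is no nonempty compact metric space Z with ghDist(Y,Z) > 0 and ghDist(X,Z) = ghDist(X,Y) + ghDist(Y,Z); equivalently, since the Gromov–Hausdorff space of compact metric spaces is geodesic, no shortest curve joining X and Y can be extended beyond Y. -/

import Mathlib

open Metric Set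

/-- non-extendability in the Gromov–Hausdorff space of nonempty compact
metric spaces (with Mathlib's `GromovHausdorff.ghDist`). `X` and `Y` are mutually
hyperextreme (`2·ghDist(X,Y) = diam X = diam Y > 0`); the index types `I`, `J` play the
roles of the cardinals `n`, `m`; `a > 0` witnesses `α(D_X) > 0`, and the covering of `Y`
has all diameters bounded by some `c < diam Y`. Then no nonempty compact metric space `Z`
satisfies `ghDist(Y,Z) > 0` and `ghDist(X,Z) = ghDist(X,Y) + ghDist(Y,Z)`. -/
theorem stmt12 {X Y I J : Type u}
    [MetricSpace X] [CompactSpace X] [Nonempty X]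
    [MetricSpace Y] [CompactSpace Y] [Nonempty Y]
    (hext : 2 * GromovHausdorff.ghDist X Y = Metric.diam (Set.univ : Set X))
    (hdiam : Metric.diam (Set.univ : Set X) = Metric.diam (Set.univ : Set Y))
    (hpos : 0 < Metric.diam (Set.univ : Set X))
    (hI1 : 1 < Cardinal.mk I) (hIX : Cardinal.mk I ≤ Cardinal.mk X)
    (hJ1 : 1 < Cardinal.mk J) (hJY : Cardinal.mk J ≤ Cardinal.mk Y)
    (hJI : Cardinal.mk J ≤ Cardinal.mk I)
    (D : I → Set X) (hDne : ∀ i, (D i).Nonempty) (hDcov : ⋃ i, D i = Set.univ)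
    (hDdisj : Pairwise (Function.onFun Disjoint D))
    (a : ℝ) (ha : 0 < a)
    (hα : ∀ i j, i ≠ j → ∀ x ∈ D i, ∀ y ∈ D j, a ≤ dist x y)
    (C : J → Set Y) (hCne : ∀ j, (C j).Nonempty) (hCcov : ⋃ j, C j = Set.univ)
    (c : ℝ) (hc : c < Metric.diam (Set.univ : Set Y))
    (hCd : ∀ j, Metric.diam (C j) ≤ c) :
    ∀ (Z : Type v) [MetricSpace Z] [CompactSpace Z] [Nonempty Z],
      ¬ (0 < GromovHausdorff.ghDist Y Z ∧
          GromovHausdorff.ghDist X Z =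
            GromovHausdorff.ghDist X Y + GromovHausdorff.ghDist Y Z) := by
  classical
  intro Z _ _ _
  rintro ⟨hr, heq⟩
  set dX := Metric.diam (Set.univ : Set X) with hdX
  set r := GromovHausdorff.ghDist Y Z with hrdef
  have hc' : c < dX := by rw [hdiam]; exact hc
  set δ : ℝ := min a (min (dX - c) (2 * r)) / 2 with hδdef
  have hδ0 : 0 < δ := by
    apply div_pos _ two_pos
    exact lt_min ha (lt_min (by linarith) (by linarith))
  have hm1 : min a (min (dX - c) (2 * r)) ≤ a := min_le_left _ _
  have hm2 : min a (min (dX - c) (2 * r)) ≤ dX - c :=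
    (min_le_right _ _).trans (min_le_left _ _)
  have hm3 : min a (min (dX - c) (2 * r)) ≤ 2 * r :=
    (min_le_right _ _).trans (min_le_right _ _)
  have hδa : 2 * δ ≤ a := by rw [hδdef]; linarith
  have hδc : 2 * δ ≤ dX - c := by rw [hδdef]; linarith
  have hδr : 2 * δ ≤ 2 * r := by rw [hδdef]; linarith
  set ε : ℝ := δ / 4 with hεdef
  set ρ : ℝ := (dX + 2 * r - δ) / 2 with hρdef
  have hρ0 : 0 < ρ := by rw [hρdef]; linarith
  -- realize ghDist Y Z by a coupling
  obtain ⟨Φ, Ψ, Φiso, Ψiso, hYZ⟩ := GromovHausdorff.ghDist_eq_hausdorffDist Y Z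
  have bΦ := (isCompact_range Φiso.continuous).isBounded
  have bΨ := (isCompact_range Ψiso.continuous).isBounded
  have hfin : EMetric.hausdorffEdist (range Φ) (range Ψ) ≠ ⊤ :=
    hausdorffEdist_ne_top_of_nonempty_of_bounded (range_nonempty _) (range_nonempty _) bΦ bΨ
  have hy' : ∀ z : Z, ∃ w : Y, dist (Φ w) (Ψ z) < r + ε := by
    intro z
    have H : hausdorffDist (range Φ) (range Ψ) < r + ε := by
      rw [← hYZ]; linarith
    obtain ⟨x, hx, hd⟩ := exists_dist_lt_of_hausdorffDist_lt' (mem_range_self z) H hfin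
    obtain ⟨w, rfl⟩ := hx
    exact ⟨w, hd⟩
  choose y hy using hy'
  have hjm' : ∀ z : Z, ∃ j, y z ∈ C j := by
    intro z
    have : y z ∈ ⋃ j, C j := by rw [hCcov]; trivial
    exact mem_iUnion.1 this
  choose jm hjm using hjm'
  have hp' : ∀ x : X, ∃ i, x ∈ D i := by
    intro x
    have : x ∈ ⋃ i, D i := by rw [hDcov]; trivial
    exact mem_iUnion.1 this
  choose p hp using hp'
  have hpu : ∀ (x : X) (i : I), x ∈ D i → p x = i := by
    intro x i hxi
    by_contra hne
    exact Set.disjoint_left.1 (hDdisj hne) (hp x) hxi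
  -- a partial surjection from I onto the range of jm
  obtain ⟨z₀⟩ := (inferInstance : Nonempty Z)
  set T : Set J := Set.range jm with hTdef
  haveI : Nonempty ↥T := ⟨⟨jm z₀, mem_range_self _⟩⟩
  have hTI : Cardinal.mk ↥T ≤ Cardinal.mk I := (Cardinal.mk_set_le T).trans hJI
  obtain ⟨e⟩ : Nonempty (↥T ↪ I) := (Cardinal.le_def _ _).1 hTI
  set σ : I → ↥T := Function.invFun e with hσdef
  have hσ : ∀ t : ↥T, σ (e t) = t := fun t => Function.leftInverse_invFun e.injective t
  -- the correspondence between X and Z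
  set K := {w : X × Z // σ (p w.1) = ⟨jm w.2, mem_range_self _⟩} with hKdef
  haveI : Nonempty K := by
    obtain ⟨x₀, hx₀⟩ := hDne (e ⟨jm z₀, mem_range_self _⟩)
    exact ⟨⟨(x₀, z₀), by rw [hpu x₀ _ hx₀, hσ]⟩⟩
  -- distance estimates
  have hXd : ∀ x x' : X, dist x x' ≤ dX := fun x x' =>
    dist_le_diam_of_mem isCompact_univ.isBounded (mem_univ x) (mem_univ x')
  have hYd : ∀ w w' : Y, dist w w' ≤ dX := by
    intro w w'
    rw [hdiam]
    exact dist_le_diam_of_mem isCompact_univ.isBounded (mem_univ w) (mem_univ w')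
  have hZbase : ∀ z z' : Z,
      dist z z' ≤ dist (y z) (y z') + 2 * r + 2 * ε := by
    intro z z'
    have h1 := hy z
    have h2 := hy z'
    have h3 : dist z z' = dist (Ψ z) (Ψ z') := (Ψiso.dist_eq z z').symm
    have h4 : dist (Φ (y z)) (Φ (y z')) = dist (y z) (y z') := Φiso.dist_eq _ _
    have h5 : dist (Ψ z) (Ψ z') ≤
        dist (Ψ z) (Φ (y z)) + dist (Φ (y z)) (Φ (y z')) + dist (Φ (y z')) (Ψ z') :=
      dist_triangle4 _ _ _ _
    have hc1 : dist (Ψ z) (Φ (y z)) = dist (Φ (y z)) (Ψ z) := dist_comm _ _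
    have hc2 : dist (Φ (y z')) (Ψ z') = dist (Φ (y z')) (Ψ z') := rfl
    linarith
  have hZd : ∀ z z' : Z, dist z z' ≤ dX + 2 * r + 2 * ε := by
    intro z z'
    have := hZbase z z'
    have := hYd (y z) (y z')
    linarith
  have hZc : ∀ z z' : Z, jm z = jm z' → dist z z' ≤ c + 2 * r + 2 * ε := by
    intro z z' hj
    have hb := isCompact_univ.isBounded.subset (subset_univ (C (jm z)))
    have h1 : dist (y z) (y z') ≤ Metric.diam (C (jm z)) :=
      dist_le_diam_of_mem hb (hjm z) (by rw [hj]; exact hjm z')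
    have h2 := hCd (jm z)
    have := hZbase z z'
    linarith
  -- distortion bound for the correspondence
  have Hdis : ∀ w w' : K,
      |dist w.1.1 w'.1.1 - dist w.1.2 w'.1.2| ≤ 2 * ρ := by
    rintro ⟨⟨x, z⟩, hw⟩ ⟨⟨x', z'⟩, hw'⟩
    simp only at hw hw' ⊢
    rw [abs_le]
    constructor
    · by_cases hjj : jm z = jm z'
      · have h1 := hZc z z' hjj
        have h2 : (0:ℝ) ≤ dist x x' := dist_nonneg
        rw [hρdef]; rw [hεdef] at h1; linarith
      · have hpp : p x ≠ p x' := by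
          intro hcontra
          apply hjj
          have : (⟨jm z, mem_range_self _⟩ : ↥T) = ⟨jm z', mem_range_self _⟩ := by
            rw [← hw, ← hw', hcontra]
          exact congrArg Subtype.val this
        have haa := hα _ _ hpp x (hp x) x' (hp x')
        have h1 := hZd z z'
        rw [hρdef]; rw [hεdef] at h1; linarith
    · have h1 := hXd x x'
      have h2 : (0:ℝ) ≤ dist z z' := dist_nonneg
      rw [hρdef]; linarith
  -- glue X and Z along the correspondence
  letI : MetricSpace (X ⊕ Z) :=
    Metric.glueMetricApprox (fun w : K => w.1.1) (fun w : K => w.1.2) ρ hρ0 Hdis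
  let Fl := @Sum.inl X Z
  let Fr := @Sum.inr X Z
  have Il : Isometry Fl := Isometry.of_dist_eq fun _ _ => rfl
  have Ir : Isometry Fr := Isometry.of_dist_eq fun _ _ => rfl
  have hGH : GromovHausdorff.ghDist X Z ≤ hausdorffDist (range Fl) (range Fr) :=
    GromovHausdorff.ghDist_le_hausdorffDist Il Ir
  have hHD : hausdorffDist (range Fl) (range Fr) ≤ ρ := by
    apply hausdorffDist_le_of_mem_dist hρ0.le
    · rintro _ ⟨x, rfl⟩
      obtain ⟨z, hz⟩ := (σ (p x)).2
      have hK : σ (p x) = ⟨jm z, mem_range_self _⟩ := Subtype.ext hz.symm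
      refine ⟨Fr z, mem_range_self _, ?_⟩
      have hpt := Metric.glueDist_glued_points (fun w : K => w.1.1) (fun w : K => w.1.2) ρ
        (⟨(x, z), hK⟩ : K)
      exact le_of_eq hpt
    · rintro _ ⟨z, rfl⟩
      obtain ⟨x, hx⟩ := hDne (e ⟨jm z, mem_range_self _⟩)
      have hK : σ (p x) = ⟨jm z, mem_range_self _⟩ := by rw [hpu x _ hx, hσ]
      refine ⟨Fl x, mem_range_self _, ?_⟩
      have hpt := Metric.glueDist_glued_points (fun w : K => w.1.1) (fun w : K => w.1.2) ρ
        (⟨(x, z), hK⟩ : K)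
      rw [dist_comm]
      exact le_of_eq hpt
  have hfinal : GromovHausdorff.ghDist X Z ≤ ρ := le_trans hGH hHD
  rw [heq] at hfinal
  rw [hρdef] at hfinal
  linarith
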